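/- Let C = XᵀX/n have unit diagonal, let β̌ ∈ R^p with |supp(β̌)| ≤ q ≤ p and supp(β̌) ⊆ A₀ (so that Σ_{j∈supp(β̌)} w_j² ≤ Σ_{j∈A₀} w_j²), assume κ(q, 3) > 0, let c > 0, and let u ∈ R^p satisfy |u_j| ≤ w_j λ/2 for all j. Then for any minimizer γ of V(·; β̌, u): |V(γ; β̌, cu) − V(γ; β̌, u)| ≤ 8 w_max |1 − c| · nλ² Σ_{j∈A₀} w_j² / (w_min κ(q,3)²). -/

import Mathlib

open Matrix

/-- The localized Lasso criterion `V(δ; b, u)`, where `C = XᵀX/n`. -/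
noncomputable def Vfun {n p : ℕ} (X : Matrix (Fin n) (Fin p) ℝ) (w : Fin p → ℝ)
    (lam r : ℝ) (b u δ : Fin p → ℝ) : ℝ :=
  (n / (2 * r ^ 2)) * dotProduct δ (((n : ℝ)⁻¹ • (Xᵀ * X)).mulVec δ)
    - (n / r) * dotProduct δ u
    + n * lam * ∑ j, w j * (|b j + δ j / r| - |b j|)

private lemma aux_div {n a b c d : ℝ} (hn : 0 < n) (h : n/2 * a - n * b + n * c * d ≤ 0) :
    a/2 - b + c * d ≤ 0 := by
  have h2 : n * (a/2 - b + c * d) ≤ n * 0 := by rw [mul_zero]; linarith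
  exact le_of_mul_le_mul_left h2 hn

private lemma aux_star {Q lam Du S TA TAc : ℝ} (hlam : 0 < lam)
    (hk : Q/2 - Du + lam * S ≤ 0) (hS : TAc - TA ≤ S)
    (hDu : Du ≤ lam/2 * (TA + TAc)) :
    Q/2 + lam/2 * TAc ≤ 3*lam/2 * TA := by
  have hlS : lam * (TAc - TA) ≤ lam * S := mul_le_mul_of_nonneg_left hS hlam.le
  nlinarith

private lemma aux_cone {Q lam TA TAc : ℝ} (hQ : 0 ≤ Q) (hlam : 0 < lam)
    (hstar : Q/2 + lam/2 * TAc ≤ 3*lam/2 * TA) : TAc ≤ 3 * TA := by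
  have h3 : lam * TAc ≤ lam * (3 * TA) := by nlinarith
  exact le_of_mul_le_mul_left h3 hlam

private lemma aux_TA {κ lam W s TA : ℝ} (hκ : 0 < κ) (hlam : 0 < lam)
    (hW : 0 ≤ W) (hTA : 0 ≤ TA) (hq : κ^2 * s ≤ 3 * lam * TA)
    (hcs : TA^2 ≤ W * s) : TA ≤ 3 * lam * W / κ^2 := by
  rcases eq_or_lt_of_le hTA with h0 | h0
  · rw [← h0]; positivity
  · rw [le_div_iff₀ (by positivity)]
    nlinarith [mul_le_mul_of_nonneg_left hcs (sq_nonneg κ),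
      mul_le_mul_of_nonneg_left hq hW]

private lemma aux_final {n lam a W wmin wmax κ : ℝ} (hn : 0 ≤ n) (hlam : 0 < lam)
    (ha : 0 ≤ a) (hW : 0 ≤ W) (hκ : 0 < κ) (hwmin : 0 < wmin)
    (hminmax : wmin ≤ wmax) :
    n * lam / 2 * a * (12 * lam * W / κ^2) ≤
      8 * wmax * a * (n * lam^2 * W) / (wmin * κ^2) := by
  rw [show n * lam / 2 * a * (12 * lam * W / κ^2)
      = 6 * (n * lam^2 * a * W) / κ^2 by ring]
  rw [div_le_div_iff₀ (by positivity) (by positivity)]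
  nlinarith [mul_le_mul_of_nonneg_right
    (show 6 * wmin ≤ 8 * wmax by linarith)
    (show (0:ℝ) ≤ n * lam^2 * a * W * κ^2 by positivity)]

set_option maxHeartbeats 1000000 in
/-- Stability of the minimum value of `V(·; β̌, ·)` under rescaling of `u`:
`|V(γ; β̌, cu) − V(γ; β̌, u)| ≤ 8 w_max |1 − c| nλ² Σ_{A₀} w_j² / (w_min κ(q,3)²)`. -/
theorem V_scale_u_bound {n p : ℕ}
    (X : Matrix (Fin n) (Fin p) ℝ) (w : Fin p → ℝ) (hw : ∀ j, 0 < w j)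
    (lam : ℝ) (hlam : 0 < lam) (r : ℝ) (hr : 0 < r)
    (wmin wmax : ℝ) (hwmin : IsLeast (Set.range w) wmin)
    (hwmax : IsGreatest (Set.range w) wmax)
    (hdiag : ∀ j, ((n : ℝ)⁻¹ • (Xᵀ * X)) j j = 1)
    (β₀ βc : Fin p → ℝ)
    (A₀ Ac : Finset (Fin p)) (hA₀ : ∀ j, j ∈ A₀ ↔ β₀ j ≠ 0)
    (hAc : ∀ j, j ∈ Ac ↔ βc j ≠ 0) (hsub : Ac ⊆ A₀)
    (q : ℕ) (hcard : Ac.card ≤ q) (hqp : q ≤ p)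
    -- Assumption RE(q, 3)
    (κq : ℝ) (hκq : 0 < κq)
    (hREq : ∀ A : Finset (Fin p), A.card ≤ q → ∀ δ : Fin p → ℝ, δ ≠ 0 →
      (∑ j ∈ Aᶜ, w j * |δ j|) ≤ 3 * ∑ j ∈ A, w j * |δ j| →
      κq * Real.sqrt n * Real.sqrt (∑ j ∈ A, δ j ^ 2) ≤
        Real.sqrt (∑ i, (X.mulVec δ i) ^ 2))
    (c : ℝ) (hc : 0 < c)
    (u : Fin p → ℝ) (hu : ∀ j, |u j| ≤ w j * lam / 2)
    (γ : Fin p → ℝ)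
    (hγ : ∀ δ, Vfun X w lam r βc u γ ≤ Vfun X w lam r βc u δ) :
    |Vfun X w lam r βc (c • u) γ - Vfun X w lam r βc u γ| ≤
      8 * wmax * |1 - c| * ((n : ℝ) * lam ^ 2 * ∑ j ∈ A₀, w j ^ 2) /
        (wmin * κq ^ 2) := by

  classical
  obtain ⟨j₀, hj₀⟩ := hwmin.1
  obtain ⟨j₁, hj₁⟩ := hwmax.1
  have hwminpos : 0 < wmin := hj₀ ▸ hw j₀
  have hwmaxpos : 0 < wmax := hj₁ ▸ hw j₁
  have hminmax : wmin ≤ wmax := hj₁ ▸ hwmin.2 ⟨j₁, rfl⟩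
  have W₀nn : (0:ℝ) ≤ ∑ j ∈ A₀, w j ^ 2 := Finset.sum_nonneg fun j _ => sq_nonneg _
  set W₀ : ℝ := ∑ j ∈ A₀, w j ^ 2 with hW₀
  rcases Nat.eq_zero_or_pos n with hn | hn
  · subst hn
    simp only [Vfun, Nat.cast_zero, zero_div, zero_mul, mul_zero, zero_sub, neg_zero,
      zero_add, sub_self, abs_zero, zero_mul]
    positivity
  have hnR : (0:ℝ) < n := by exact_mod_cast hn
  -- the difference of criteria
  have hdiff : Vfun X w lam r βc (c • u) γ - Vfun X w lam r βc u γ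
      = ((n:ℝ) / r) * ((1 - c) * dotProduct γ u) := by
    simp only [Vfun, dotProduct_smul, smul_eq_mul]
    ring
  -- set up theta := gamma / r
  set θ : Fin p → ℝ := fun j => γ j / r with hθdef
  have hγθ : γ = r • θ := by
    funext j
    simp only [hθdef, Pi.smul_apply, smul_eq_mul]
    rw [mul_div_cancel₀ _ hr.ne']
  set Qθ : ℝ := dotProduct θ (((n : ℝ)⁻¹ • (Xᵀ * X)).mulVec θ) with hQθdef
  set Du : ℝ := dotProduct θ u with hDudef
  set S : ℝ := ∑ j, w j * (|βc j + θ j| - |βc j|) with hSdef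
  set T : ℝ := ∑ j, w j * |θ j| with hTdef
  set TA : ℝ := ∑ j ∈ Ac, w j * |θ j| with hTAdef
  set TAc : ℝ := ∑ j ∈ Acᶜ, w j * |θ j| with hTAcdef
  set E : ℝ := ∑ i, (X.mulVec θ i) ^ 2 with hEdef
  set sA2 : ℝ := ∑ j ∈ Ac, θ j ^ 2 with hsA2def
  set WAc : ℝ := ∑ j ∈ Ac, w j ^ 2 with hWAcdef
  have hEnn : (0:ℝ) ≤ E := Finset.sum_nonneg fun i _ => sq_nonneg _
  have hsA2nn : (0:ℝ) ≤ sA2 := Finset.sum_nonneg fun j _ => sq_nonneg _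
  have hWAcnn : (0:ℝ) ≤ WAc := Finset.sum_nonneg fun j _ => sq_nonneg _
  have hTAnn : (0:ℝ) ≤ TA :=
    Finset.sum_nonneg fun j _ => mul_nonneg (hw j).le (abs_nonneg _)
  have hTAcnn : (0:ℝ) ≤ TAc :=
    Finset.sum_nonneg fun j _ => mul_nonneg (hw j).le (abs_nonneg _)
  have hTsplit : TA + TAc = T := Finset.sum_add_sum_compl Ac _
  -- V(gamma) <= V(0) = 0
  have h0 : Vfun X w lam r βc u γ ≤ 0 := by
    have h := hγ 0
    simpa [Vfun] using h
  -- rewrite V(gamma) in terms of theta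
  have hQ : dotProduct γ (((n : ℝ)⁻¹ • (Xᵀ * X)).mulVec γ) = r ^ 2 * Qθ := by
    rw [hγθ, Matrix.mulVec_smul, smul_dotProduct, dotProduct_smul,
      smul_eq_mul, smul_eq_mul, hQθdef]
    ring
  have hDueq : dotProduct γ u = r * Du := by
    rw [hγθ, smul_dotProduct, smul_eq_mul, hDudef]
  have hVeq : Vfun X w lam r βc u γ = (n:ℝ)/2 * Qθ - n * Du + n * lam * S := by
    unfold Vfun
    rw [hQ, hDueq]
    have hsum : (∑ j, w j * (|βc j + γ j / r| - |βc j|)) = S := rfl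
    rw [hsum]
    field_simp
  have hkey : (n:ℝ)/2 * Qθ - n * Du + n * lam * S ≤ 0 := hVeq ▸ h0
  have hkey2 : Qθ/2 - Du + lam * S ≤ 0 := aux_div hnR hkey
  -- quadratic form as squared norm
  have hQE : Qθ = (n:ℝ)⁻¹ * E := by
    rw [hQθdef, Matrix.smul_mulVec, dotProduct_smul, smul_eq_mul,
      ← Matrix.mulVec_mulVec, Matrix.dotProduct_mulVec, Matrix.vecMul_transpose, hEdef]
    congr 1
    simp [dotProduct, sq]
  have hQnn : (0:ℝ) ≤ Qθ := by
    rw [hQE]; positivity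
  -- bound on Du
  have hDu : Du ≤ lam/2 * T := by
    calc Du ≤ |Du| := le_abs_self _
    _ ≤ ∑ j, |θ j * u j| := by
        rw [hDudef, dotProduct]
        exact Finset.abs_sum_le_sum_abs _ _
    _ ≤ ∑ j, |θ j| * (w j * lam / 2) := by
        apply Finset.sum_le_sum
        intro j _
        rw [abs_mul]
        exact mul_le_mul_of_nonneg_left (hu j) (abs_nonneg _)
    _ = lam/2 * T := by
        rw [hTdef, Finset.mul_sum]
        apply Finset.sum_congr rfl
        intro j _
        ring
  -- bound on S
  have hS : TAc - TA ≤ S := by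
    have hSs : S = (∑ j ∈ Ac, w j * (|βc j + θ j| - |βc j|))
        + ∑ j ∈ Acᶜ, w j * (|βc j + θ j| - |βc j|) := by
      rw [hSdef, Finset.sum_add_sum_compl]
    have h1 : (∑ j ∈ Acᶜ, w j * (|βc j + θ j| - |βc j|)) = TAc := by
      rw [hTAcdef]
      apply Finset.sum_congr rfl
      intro j hj
      have hb : βc j = 0 := by
        by_contra hb
        exact (Finset.mem_compl.mp hj) ((hAc j).mpr hb)
      rw [hb]
      simp
    have h2 : -TA ≤ ∑ j ∈ Ac, w j * (|βc j + θ j| - |βc j|) := by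
      rw [hTAdef, ← Finset.sum_neg_distrib]
      apply Finset.sum_le_sum
      intro j _
      have habs : -|θ j| ≤ |βc j + θ j| - |βc j| := by
        have h := abs_sub_abs_le_abs_sub (βc j) (βc j + θ j)
        have he : βc j - (βc j + θ j) = -θ j := by ring
        rw [he, abs_neg] at h
        linarith
      calc -(w j * |θ j|) = w j * (-|θ j|) := by ring
        _ ≤ w j * (|βc j + θ j| - |βc j|) :=
            mul_le_mul_of_nonneg_left habs (hw j).le
    rw [hSs, h1]
    linarith
  -- the star inequality
  have hstar : Qθ/2 + lam/2 * TAc ≤ 3*lam/2 * TA :=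
    aux_star hlam hkey2 hS (by rw [hTsplit]; exact hDu)
  have cone : TAc ≤ 3 * TA := aux_cone hQnn hlam hstar
  -- the main ell_1 bound
  have hT : T ≤ 12 * lam * W₀ / κq ^ 2 := by
    by_cases hθ0 : θ = 0
    · have : T = 0 := by
        rw [hTdef]
        apply Finset.sum_eq_zero
        intro j _
        rw [hθ0]
        simp
      rw [this]
      positivity
    · have hre := hREq Ac hcard θ hθ0 cone
      have hEre : κq ^ 2 * n * sA2 ≤ E := by
        have hL : 0 ≤ κq * Real.sqrt n * Real.sqrt sA2 := by positivity
        have h1 := mul_self_le_mul_self hL hre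
        rw [Real.mul_self_sqrt hEnn] at h1
        have h2 : κq ^ 2 * (n:ℝ) * sA2
            = (κq * Real.sqrt n * Real.sqrt sA2) * (κq * Real.sqrt n * Real.sqrt sA2) := by
          rw [show (κq * Real.sqrt n * Real.sqrt sA2) * (κq * Real.sqrt n * Real.sqrt sA2)
              = κq ^ 2 * (Real.sqrt n * Real.sqrt n) * (Real.sqrt sA2 * Real.sqrt sA2) by ring,
            Real.mul_self_sqrt hnR.le, Real.mul_self_sqrt hsA2nn]
        rw [h2]
        exact h1
      have hQlow : κq ^ 2 * sA2 ≤ Qθ := by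
        rw [hQE]
        have h := mul_le_mul_of_nonneg_left hEre (inv_nonneg.mpr hnR.le)
        calc κq ^ 2 * sA2 = (n:ℝ)⁻¹ * (κq ^ 2 * n * sA2) := by
              field_simp
          _ ≤ (n:ℝ)⁻¹ * E := h
      have hq2 : κq ^ 2 * sA2 ≤ 3 * lam * TA := by
        have hl : lam/2 * TAc ≥ 0 := by positivity
        linarith [hstar, hQlow]
      have hcs : TA ^ 2 ≤ WAc * sA2 := by
        have := Finset.sum_mul_sq_le_sq_mul_sq Ac w (fun j => |θ j|)
        simpa [hTAdef, hWAcdef, hsA2def, sq_abs] using this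
      have hTA : TA ≤ 3 * lam * WAc / κq ^ 2 :=
        aux_TA hκq hlam hWAcnn hTAnn hq2 hcs
      have hWsub : WAc ≤ W₀ :=
        Finset.sum_le_sum_of_subset_of_nonneg hsub (fun j _ _ => sq_nonneg _)
      calc T = TA + TAc := hTsplit.symm
        _ ≤ 4 * TA := by linarith
        _ ≤ 4 * (3 * lam * WAc / κq ^ 2) := by linarith
        _ = 12 * lam * WAc / κq ^ 2 := by ring
        _ ≤ 12 * lam * W₀ / κq ^ 2 := by gcongr
  -- the dot product bound
  have hdot : |dotProduct γ u| ≤ lam / 2 * (r * T) := by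
    calc |dotProduct γ u| ≤ ∑ j, |γ j * u j| := by
          rw [dotProduct]
          exact Finset.abs_sum_le_sum_abs _ _
      _ ≤ ∑ j, |γ j| * (w j * lam / 2) := by
          apply Finset.sum_le_sum
          intro j _
          rw [abs_mul]
          exact mul_le_mul_of_nonneg_left (hu j) (abs_nonneg _)
      _ = lam / 2 * (r * T) := by
          rw [hTdef, Finset.mul_sum, Finset.mul_sum]
          apply Finset.sum_congr rfl
          intro j _
          have : |γ j| = r * |θ j| := by
            rw [hθdef]
            rw [abs_div, abs_of_pos hr]
            field_simp
          rw [this]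
          ring
  -- final assembly
  have hTnn : (0:ℝ) ≤ T := by linarith
  calc |Vfun X w lam r βc (c • u) γ - Vfun X w lam r βc u γ|
      = ((n:ℝ)/r) * (|1 - c| * |dotProduct γ u|) := by
        rw [hdiff, abs_mul, abs_mul, abs_of_nonneg (by positivity : (0:ℝ) ≤ (n:ℝ)/r)]
    _ ≤ ((n:ℝ)/r) * (|1 - c| * (lam / 2 * (r * T))) := by
        apply mul_le_mul_of_nonneg_left _ (by positivity)
        exact mul_le_mul_of_nonneg_left hdot (abs_nonneg _)
    _ = (n:ℝ) * lam / 2 * |1 - c| * T := by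
        field_simp
    _ ≤ (n:ℝ) * lam / 2 * |1 - c| * (12 * lam * W₀ / κq ^ 2) := by
        apply mul_le_mul_of_nonneg_left hT (by positivity)
    _ ≤ 8 * wmax * |1 - c| * ((n : ℝ) * lam ^ 2 * W₀) / (wmin * κq ^ 2) :=
        aux_final hnR.le hlam (abs_nonneg _) W₀nn hκq hwminpos hminmax
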